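/- Let m > 1, K ≥ 1, and let Ψ : ℝ → ℝ satisfy K|Ψ(r) − Ψ(ζ)| ≥ |r − ζ| whenever |r| ∨ |ζ| ≥ 1 and K|Ψ(r) − Ψ(ζ)| ≥ |r − ζ|^{(m+1)/2} whenever |r| ∨ |ζ| < 1. Let (S, μ) be a measure space with μ(S) ≤ C < ∞, and let u₁, u₂ : S → ℝ be measurable functions such that u₁ − u₂ and Ψ∘u₁ − Ψ∘u₂ are integrable. Then ∫_S |u₁ − u₂| dμ ≤ K ∫_S |Ψ(u₁) − Ψ(u₂)| dμ + C^{(m−1)/(m+1)} (K ∫_S |Ψ(u₁) − Ψ(u₂)| dμ)^{2/(m+1)}. -/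

import Mathlib

open MeasureTheory

theorem L1_interpolation_split (m K : ℝ) (hm : 1 < m) (hK : 1 ≤ K) (Ψ : ℝ → ℝ)
    (h1 : ∀ r ζ : ℝ, 1 ≤ max |r| |ζ| → |r - ζ| ≤ K * |Ψ r - Ψ ζ|)
    (h2 : ∀ r ζ : ℝ, max |r| |ζ| < 1 → |r - ζ| ^ ((m + 1) / 2) ≤ K * |Ψ r - Ψ ζ|)
    (S : Type*) [MeasurableSpace S] (μ : Measure S) (C : ℝ) (hC : 0 ≤ C)
    (hμ : μ Set.univ ≤ ENNReal.ofReal C)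
    (u₁ u₂ : S → ℝ) (hmeas₁ : Measurable u₁) (hmeas₂ : Measurable u₂)
    (hint : Integrable (fun s => u₁ s - u₂ s) μ)
    (hintΨ : Integrable (fun s => Ψ (u₁ s) - Ψ (u₂ s)) μ) :
    (∫ s, |u₁ s - u₂ s| ∂μ) ≤
      K * (∫ s, |Ψ (u₁ s) - Ψ (u₂ s)| ∂μ)
        + C ^ ((m - 1) / (m + 1)) * (K * ∫ s, |Ψ (u₁ s) - Ψ (u₂ s)| ∂μ) ^ (2 / (m + 1)) := by
  set θ : ℝ := 2 / (m + 1) with hθdef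
  have hm1 : (0:ℝ) < m + 1 := by linarith
  have hθ0 : 0 < θ := by positivity
  have hθ1 : θ < 1 := by
    rw [hθdef, div_lt_one hm1]; linarith
  have h1θ : (m - 1) / (m + 1) = 1 - θ := by
    rw [hθdef]; field_simp; ring
  have hfin : IsFiniteMeasure μ :=
    ⟨lt_of_le_of_lt hμ ENNReal.ofReal_lt_top⟩
  set g : S → ℝ := fun s => K * |Ψ (u₁ s) - Ψ (u₂ s)| with hgdef
  have hg0 : ∀ s, 0 ≤ g s := fun s => by positivity
  have hgint : Integrable g μ := (hintΨ.abs.const_mul K)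
  -- pointwise bound
  have hptwise : ∀ s, |u₁ s - u₂ s| ≤ g s + g s ^ θ := by
    intro s
    rcases le_or_gt 1 (max |u₁ s| |u₂ s|) with h | h
    · have h' : |u₁ s - u₂ s| ≤ g s := h1 (u₁ s) (u₂ s) h
      nlinarith [Real.rpow_nonneg (hg0 s) θ]
    · have hle := h2 (u₁ s) (u₂ s) h
      have habs : (0:ℝ) ≤ |u₁ s - u₂ s| := abs_nonneg _
      have h3 : (|u₁ s - u₂ s| ^ ((m + 1) / 2)) ^ θ ≤ g s ^ θ :=
        Real.rpow_le_rpow (Real.rpow_nonneg habs _) hle hθ0.le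
      rw [← Real.rpow_mul habs] at h3
      have hexp : (m + 1) / 2 * θ = 1 := by
        rw [hθdef]; field_simp
      rw [hexp, Real.rpow_one] at h3
      nlinarith [hg0 s]
  -- integrability of g ^ θ
  have hgθle : ∀ s, g s ^ θ ≤ 1 + g s := by
    intro s
    rcases le_or_gt (g s) 1 with h | h
    · have := Real.rpow_le_one (hg0 s) h hθ0.le
      nlinarith [hg0 s]
    · have := Real.rpow_le_rpow_of_exponent_le h.le hθ1.le
      rw [Real.rpow_one] at this
      linarith
  have hgmeas : AEStronglyMeasurable g μ := hgint.aestronglyMeasurable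
  have hgθmeas : AEStronglyMeasurable (fun s => g s ^ θ) μ :=
    (hgmeas.aemeasurable.pow aemeasurable_const).aestronglyMeasurable
  have hgθint : Integrable (fun s => g s ^ θ) μ := by
    refine Integrable.mono' ((integrable_const (1:ℝ)).add hgint) hgθmeas ?_
    filter_upwards with s
    rw [Real.norm_eq_abs, abs_of_nonneg (Real.rpow_nonneg (hg0 s) θ)]
    exact hgθle s
  -- key: ∫ g^θ ≤ C^(1-θ) * (∫ g)^θ, via lintegral Hölder
  set G : S → ENNReal := fun s => ENNReal.ofReal (g s) with hGdef
  have hGmeas : AEMeasurable G μ := hgmeas.aemeasurable.ennreal_ofReal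
  have hconj : Real.HolderConjugate (1/θ) (1/(1-θ)) := by
    rw [Real.holderConjugate_iff]; constructor
    · rw [lt_div_iff₀ hθ0]; linarith
    · rw [one_div, one_div, inv_inv, inv_inv]; ring
  have hHolder := ENNReal.lintegral_mul_le_Lp_mul_Lq μ hconj
      (f := fun s => G s ^ θ) (g := fun _ => (1:ENNReal))
      (hGmeas.pow aemeasurable_const) aemeasurable_const
  simp only [Pi.mul_apply, mul_one, ENNReal.one_rpow, lintegral_const, one_mul,
    one_div_one_div] at hHolder
  have hsimp1 : (fun s => (G s ^ θ) ^ (1/θ)) = G := by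
    funext s
    rw [← ENNReal.rpow_mul, mul_one_div, div_self hθ0.ne', ENNReal.rpow_one]
  have hHolder' : (∫⁻ s, G s ^ θ ∂μ) ≤ (∫⁻ s, G s ∂μ) ^ θ * μ Set.univ ^ (1 - θ) := by
    rwa [lintegral_congr (fun s => congrFun hsimp1 s)] at hHolder
  -- convert to real integrals
  set I : ℝ := ∫ s, g s ∂μ with hIdef
  have hI0 : 0 ≤ I := integral_nonneg hg0
  have hGlint : (∫⁻ s, G s ∂μ) = ENNReal.ofReal I := by
    rw [hIdef, integral_eq_lintegral_of_nonneg_ae (Filter.Eventually.of_forall hg0) hgmeas]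
    rw [ENNReal.ofReal_toReal]
    exact (hasFiniteIntegral_iff_ofReal (Filter.Eventually.of_forall hg0)).mp
      hgint.hasFiniteIntegral |>.ne
  have hkey : (∫ s, g s ^ θ ∂μ) ≤ C ^ (1 - θ) * I ^ θ := by
    have hθlint : (∫ s, g s ^ θ ∂μ)
        = (∫⁻ s, G s ^ θ ∂μ).toReal := by
      rw [integral_eq_lintegral_of_nonneg_ae
        (Filter.Eventually.of_forall fun s => Real.rpow_nonneg (hg0 s) θ) hgθmeas]
      congr 1
      apply lintegral_congr
      intro s
      exact (ENNReal.ofReal_rpow_of_nonneg (hg0 s) hθ0.le).symm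
    rw [hθlint]
    have hbound : (∫⁻ s, G s ^ θ ∂μ) ≤ ENNReal.ofReal (C ^ (1 - θ) * I ^ θ) := by
      refine hHolder'.trans ?_
      rw [hGlint]
      calc ENNReal.ofReal I ^ θ * μ Set.univ ^ (1 - θ)
          ≤ ENNReal.ofReal I ^ θ * ENNReal.ofReal C ^ (1 - θ) := by
            gcongr
        _ = ENNReal.ofReal (C ^ (1 - θ) * I ^ θ) := by
            rw [ENNReal.ofReal_rpow_of_nonneg hI0 hθ0.le,
              ENNReal.ofReal_rpow_of_nonneg hC (by linarith : (0:ℝ) ≤ 1 - θ),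
              ← ENNReal.ofReal_mul (Real.rpow_nonneg hI0 θ), mul_comm]
    calc (∫⁻ s, G s ^ θ ∂μ).toReal ≤ (ENNReal.ofReal (C ^ (1 - θ) * I ^ θ)).toReal :=
          ENNReal.toReal_mono ENNReal.ofReal_ne_top hbound
      _ = C ^ (1 - θ) * I ^ θ := ENNReal.toReal_ofReal (by positivity)
  -- final assembly
  have hIeq : I = K * ∫ s, |Ψ (u₁ s) - Ψ (u₂ s)| ∂μ := by
    rw [hIdef, hgdef]
    exact integral_const_mul K _
  have hmain : (∫ s, |u₁ s - u₂ s| ∂μ) ≤ I + ∫ s, g s ^ θ ∂μ := by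
    have : (∫ s, |u₁ s - u₂ s| ∂μ) ≤ ∫ s, (g s + g s ^ θ) ∂μ :=
      integral_mono hint.abs (hgint.add hgθint) hptwise
    rwa [integral_add hgint hgθint] at this
  rw [h1θ, ← hIeq]
  calc (∫ s, |u₁ s - u₂ s| ∂μ) ≤ I + ∫ s, g s ^ θ ∂μ := hmain
    _ ≤ I + C ^ (1 - θ) * I ^ θ := by linarith [hkey]
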